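/- Let H : [0,1] ∪ {∞} → [1/2,1] ∪ {∞} be H(t) = 1/(2−t) for t ∈ [0,1] and H(∞) = ∞. If μ solves the RDE associated with χ (i.e., ∫_{[0,t]} s dμ(s) = μ([0,t])² for all t ∈ [0,1]), then the pushforward of μ under H solves the RDE associated with γ; conversely, if μ' solves the γ-RDE then the pushforward of μ' under H⁻¹ solves the χ-RDE. -/

import Mathlib

open MeasureTheory Set
open scoped ENNReal

/-- γ[t](x,y) on I = [0,1] ∪ {∞} ⊆ ℝ≥0∞: min x y if min x y > t, else ∞. -/
noncomputable def gammaMap (t : ℝ) (x y : ℝ≥0∞) : ℝ≥0∞ :=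
  if ENNReal.ofReal t < min x y then min x y else ⊤

/-- The map H : [0,1] ∪ {∞} → [1/2,1] ∪ {∞}, H(t) = 1/(2−t), H(∞) = ∞. -/
noncomputable def Hmap : ℝ≥0∞ → ℝ≥0∞ :=
  fun x => if x = ⊤ then ⊤ else ENNReal.ofReal (1/(2 - x.toReal))

/-- The inverse map H⁻¹ : [1/2,1] ∪ {∞} → [0,1] ∪ {∞}, H⁻¹(t) = 2 − 1/t, H⁻¹(∞) = ∞. -/
noncomputable def Hinv : ℝ≥0∞ → ℝ≥0∞ :=
  fun y => if y = ⊤ then ⊤ else ENNReal.ofReal (2 - 1/y.toReal)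

namespace StmtAux

noncomputable def gam : ℝ × ℝ≥0∞ × ℝ≥0∞ → ℝ≥0∞ := fun p => gammaMap p.1 p.2.1 p.2.2

noncomputable def mn : ℝ≥0∞ × ℝ≥0∞ → ℝ≥0∞ := fun q => min q.1 q.2

lemma measurable_mn : Measurable mn := measurable_fst.min measurable_snd

lemma measurable_gam : Measurable gam := by
  unfold gam gammaMap
  have h1 : Measurable fun p : ℝ × ℝ≥0∞ × ℝ≥0∞ => ENNReal.ofReal p.1 :=
    ENNReal.measurable_ofReal.comp measurable_fst
  have h2 : Measurable fun p : ℝ × ℝ≥0∞ × ℝ≥0∞ => min p.2.1 p.2.2 :=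
    (measurable_fst.comp measurable_snd).min (measurable_snd.comp measurable_snd)
  exact Measurable.ite (measurableSet_lt h1 h2) h2 measurable_const

lemma measurable_Hmap : Measurable Hmap := by
  unfold Hmap
  refine Measurable.ite (measurableSet_eq) measurable_const ?_
  exact ENNReal.measurable_ofReal.comp <|
    (measurable_const.div ((measurable_const.sub ENNReal.measurable_toReal)))

lemma measurable_Hinv : Measurable Hinv := by
  unfold Hinv
  refine Measurable.ite (measurableSet_eq) measurable_const ?_
  exact ENNReal.measurable_ofReal.comp <|
    (measurable_const.sub (measurable_const.div ENNReal.measurable_toReal))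

noncomputable def lam : Measure ℝ := volume.restrict (Icc (0:ℝ) 1)

instance : IsProbabilityMeasure lam := by
  constructor
  rw [lam, Measure.restrict_apply_univ, Real.volume_Icc]
  norm_num

lemma lam_lt (m : ℝ≥0∞) : lam {t : ℝ | ENNReal.ofReal t < m} = min m 1 := by
  unfold lam
  rw [Measure.restrict_apply' measurableSet_Icc]
  rcases eq_or_ne m ⊤ with hm | hm
  · have : {t : ℝ | ENNReal.ofReal t < m} = univ := by
      ext t; simp [hm, ENNReal.ofReal_lt_top]
    rw [this, univ_inter, Real.volume_Icc]
    simp [hm]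
  · rcases le_or_gt m 1 with h1 | h1
    · have hm0 : 0 ≤ m.toReal := ENNReal.toReal_nonneg
      have : {t : ℝ | ENNReal.ofReal t < m} ∩ Icc 0 1 = Ico 0 m.toReal := by
        ext t
        simp only [mem_inter_iff, mem_setOf_eq, mem_Icc, mem_Ico]
        constructor
        · rintro ⟨hlt, ht0, _⟩
          exact ⟨ht0, by rwa [ENNReal.ofReal_lt_iff_lt_toReal ht0 hm] at hlt⟩
        · rintro ⟨ht0, htm⟩
          have hm1 : m.toReal ≤ 1 := by
            have := ENNReal.toReal_mono (by norm_num) h1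
            simpa using this
          exact ⟨by rwa [ENNReal.ofReal_lt_iff_lt_toReal ht0 hm], ht0,
            le_trans htm.le hm1⟩
      rw [this, Real.volume_Ico, min_eq_left h1, sub_zero, ENNReal.ofReal_toReal hm]
    · have : {t : ℝ | ENNReal.ofReal t < m} ∩ Icc 0 1 = Icc 0 1 := by
        apply inter_eq_right.mpr
        intro t ht
        simp only [mem_setOf_eq]
        calc ENNReal.ofReal t ≤ 1 := by
              rw [show (1:ℝ≥0∞) = ENNReal.ofReal 1 by simp]
              exact ENNReal.ofReal_le_ofReal ht.2
          _ < m := h1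
      rw [this, Real.volume_Icc, min_eq_right h1.le]
      norm_num

lemma lam_not_lt (m : ℝ≥0∞) :
    lam {t : ℝ | ¬ ENNReal.ofReal t < m} = 1 - min m 1 := by
  have hs : MeasurableSet {t : ℝ | ENNReal.ofReal t < m} :=
    measurableSet_lt (ENNReal.measurable_ofReal) measurable_const
  have : {t : ℝ | ¬ ENNReal.ofReal t < m} = {t : ℝ | ENNReal.ofReal t < m}ᶜ := rfl
  rw [this, prob_compl_eq_one_sub hs, lam_lt]

lemma lint_t (f : ℝ≥0∞ → ℝ≥0∞) (x y : ℝ≥0∞) :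
    ∫⁻ t, f (gam (t, x, y)) ∂lam
      = min (min x y) 1 * f (min x y) + (1 - min (min x y) 1) * f ⊤ := by
  set m := min x y with hm
  have hset : MeasurableSet {t : ℝ | ENNReal.ofReal t < m} :=
    measurableSet_lt (ENNReal.measurable_ofReal) measurable_const
  have hfun : ∀ t : ℝ, f (gam (t, x, y))
      = {t : ℝ | ENNReal.ofReal t < m}.indicator (fun _ => f m) t
        + {t : ℝ | ENNReal.ofReal t < m}ᶜ.indicator (fun _ => f ⊤) t := by
    intro t
    by_cases h : ENNReal.ofReal t < m
    · rw [Set.indicator_of_mem (show t ∈ {t : ℝ | ENNReal.ofReal t < m} from h), Set.indicator_of_notMem (by simpa using h : t ∉ {t : ℝ | ENNReal.ofReal t < m}ᶜ)]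
      simp only [gam, gammaMap]
      rw [if_pos (by exact h)]
      simp [hm]
    · rw [Set.indicator_of_notMem (show t ∉ {t : ℝ | ENNReal.ofReal t < m} from h), Set.indicator_of_mem (by simpa using h : t ∈ {t : ℝ | ENNReal.ofReal t < m}ᶜ)]
      simp only [gam, gammaMap]
      rw [if_neg (by exact h)]
      simp
  simp_rw [hfun]
  rw [lintegral_add_left (measurable_const.indicator hset)]
  rw [lintegral_indicator hset, lintegral_indicator hset.compl]
  rw [setLIntegral_const, setLIntegral_const]
  have h1 : lam {t : ℝ | ENNReal.ofReal t < m} = min m 1 := lam_lt m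
  have h2 : lam {t : ℝ | ENNReal.ofReal t < m}ᶜ = 1 - min m 1 := by
    rw [prob_compl_eq_one_sub hset, lam_lt]
  rw [h1, h2, mul_comm, mul_comm (f ⊤)]

lemma lint_gam (ν : Measure ℝ≥0∞) [IsProbabilityMeasure ν] {f : ℝ≥0∞ → ℝ≥0∞}
    (hf : Measurable f) :
    ∫⁻ p, f (gam p) ∂(lam.prod (ν.prod ν))
      = ∫⁻ q, (min (mn q) 1 * f (mn q) + (1 - min (mn q) 1) * f ⊤) ∂(ν.prod ν) := by
  rw [lintegral_prod_symm (fun p => f (gam p))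
    (Measurable.aemeasurable (by exact hf.comp measurable_gam))]
  refine lintegral_congr fun q => ?_
  simpa [mn] using lint_t f q.1 q.2

lemma map_apply_set (ν : Measure ℝ≥0∞) [IsProbabilityMeasure ν] {S : Set ℝ≥0∞}
    (hS : MeasurableSet S) :
    Measure.map gam (lam.prod (ν.prod ν)) S
      = ∫⁻ q, (min (mn q) 1 * S.indicator 1 (mn q)
          + (1 - min (mn q) 1) * S.indicator 1 ⊤) ∂(ν.prod ν) := by
  rw [Measure.map_apply measurable_gam hS]
  have h1 : lam.prod (ν.prod ν) (gam ⁻¹' S)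
      = ∫⁻ p, S.indicator 1 (gam p) ∂(lam.prod (ν.prod ν)) := by
    rw [← lintegral_indicator_one (measurable_gam hS)]
    refine lintegral_congr fun p => ?_
    by_cases h : gam p ∈ S <;> simp [h, Set.indicator]
  rw [h1, lint_gam ν (measurable_one.indicator hS)]

lemma ne_top_of_le_one {a : ℝ≥0∞} (ha : a ≤ 1) : a ≠ ⊤ :=
  (lt_of_le_of_lt ha ENNReal.one_lt_top).ne

lemma map_Iic_le_one (ν : Measure ℝ≥0∞) [IsProbabilityMeasure ν] {a : ℝ≥0∞} (ha : a ≤ 1) :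
    Measure.map gam (lam.prod (ν.prod ν)) (Iic a)
      = ∫⁻ q, (Iic a).indicator (fun m => m) (mn q) ∂(ν.prod ν) := by
  rw [map_apply_set ν measurableSet_Iic]
  refine lintegral_congr fun q => ?_
  have htop : (⊤:ℝ≥0∞) ∉ Iic a := by
    simp only [mem_Iic, top_le_iff]
    exact ne_top_of_le_one ha
  rw [Set.indicator_of_notMem htop, mul_zero, add_zero]
  by_cases h : mn q ∈ Iic a
  · rw [Set.indicator_of_mem h, Set.indicator_of_mem h, Pi.one_apply, mul_one,
      min_eq_left (le_trans h ha)]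
  · rw [Set.indicator_of_notMem h, Set.indicator_of_notMem h, mul_zero]

lemma k_min_gt (ν : Measure ℝ≥0∞) [IsProbabilityMeasure ν] (c : ℝ≥0∞) :
    (ν.prod ν) {q | c < mn q} = (ν (Ioi c))^2 := by
  have h : {q : ℝ≥0∞ × ℝ≥0∞ | c < mn q} = (Ioi c) ×ˢ (Ioi c) := by
    ext q; simp [mn, lt_min_iff]
  rw [h, Measure.prod_prod, sq]

lemma tailA (ν : Measure ℝ≥0∞) [IsProbabilityMeasure ν] {a : ℝ≥0∞} (ha : a ≤ 1) :
    ∫⁻ q, (Iic a).indicator (fun m => m) (mn q) ∂(ν.prod ν)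
      = ∫⁻ s in Ioi (0:ℝ), (ν.prod ν) {q | ENNReal.ofReal s < mn q ∧ mn q ≤ a} := by
  set κ := ν.prod ν with hκ
  set f : ℝ≥0∞ × ℝ≥0∞ → ℝ := fun q => if mn q ≤ a then (mn q).toReal else 0 with hf
  have hmble : Measurable f :=
    Measurable.ite (measurableSet_le measurable_mn measurable_const)
      (ENNReal.measurable_toReal.comp measurable_mn) measurable_const
  have heq : ∀ q, (Iic a).indicator (fun m => m) (mn q) = ENNReal.ofReal (f q) := by
    intro q
    by_cases h : mn q ≤ a
    · rw [Set.indicator_of_mem (show mn q ∈ Iic a from h), hf]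
      simp only [if_pos h]
      exact (ENNReal.ofReal_toReal (ne_top_of_le_ne_top (ne_top_of_le_one ha) h)).symm
    · rw [Set.indicator_of_notMem (show mn q ∉ Iic a from h), hf]
      simp [h]
  simp_rw [heq]
  rw [lintegral_eq_lintegral_meas_lt κ (ae_of_all _ fun q => by
    rw [hf]; dsimp only; split <;> simp [ENNReal.toReal_nonneg]) hmble.aemeasurable]
  refine setLIntegral_congr_fun measurableSet_Ioi (fun s hs => ?_)
  congr 1
  ext q
  simp only [mem_setOf_eq, hf]
  by_cases h : mn q ≤ a
  · rw [if_pos h]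
    simp only [h, and_true]
    exact (ENNReal.ofReal_lt_iff_lt_toReal (le_of_lt (mem_Ioi.mp hs))
      (ne_top_of_le_ne_top (ne_top_of_le_one ha) h)).symm
  · rw [if_neg h]
    simp only [h, and_false, iff_false, not_lt]
    exact le_of_lt (mem_Ioi.mp hs)

lemma E1 (ν : Measure ℝ≥0∞) [IsProbabilityMeasure ν] {a : ℝ≥0∞} (ha : a ≤ 1) (ha0 : a ≠ 0) :
    (∫⁻ q, (Iic a).indicator (fun m => m) (mn q) ∂(ν.prod ν)) + a * (ν (Ioi a))^2
      = ∫⁻ s in Ioo (0:ℝ) a.toReal, (ν (Ioi (ENNReal.ofReal s)))^2 := by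
  have hane : a ≠ ⊤ := ne_top_of_le_one ha
  have hapos : 0 < a.toReal := ENNReal.toReal_pos ha0 hane
  rw [tailA ν ha]
  have hsplit : Ioi (0:ℝ) = Ioo (0:ℝ) a.toReal ∪ Ici a.toReal := by
    ext s; simp only [mem_Ioi, mem_union, mem_Ioo, mem_Ici]
    constructor
    · intro h; rcases lt_or_ge s a.toReal with h2 | h2
      · exact Or.inl ⟨h, h2⟩
      · exact Or.inr h2
    · rintro (⟨h, _⟩ | h)
      · exact h
      · exact lt_of_lt_of_le hapos h
  rw [hsplit, lintegral_union measurableSet_Ici (by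
    intro u hu1 hu2 s hs
    exact absurd ((hu2 hs) : a.toReal ≤ s) (not_le.mpr ((hu1 hs) : s ∈ Ioo _ _).2))]
  have hzero : ∫⁻ s in Ici a.toReal, (ν.prod ν) {q | ENNReal.ofReal s < mn q ∧ mn q ≤ a} = 0 := by
    rw [setLIntegral_congr_fun measurableSet_Ici (fun s hs => ?_), lintegral_zero]
    have hempty : {q : ℝ≥0∞ × ℝ≥0∞ | ENNReal.ofReal s < mn q ∧ mn q ≤ a} = ∅ := by
      ext q; simp only [mem_setOf_eq, mem_empty_iff_false, iff_false, not_and, not_le]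
      intro hlt
      have : a ≤ ENNReal.ofReal s := by
        rw [← ENNReal.ofReal_toReal hane]
        exact ENNReal.ofReal_le_ofReal hs
      exact lt_of_le_of_lt this hlt
    rw [hempty, measure_empty]
  rw [hzero, add_zero]
  have hconst : a * (ν (Ioi a))^2 = ∫⁻ _ in Ioo (0:ℝ) a.toReal, (ν (Ioi a))^2 := by
    rw [setLIntegral_const, Real.volume_Ioo, sub_zero, ENNReal.ofReal_toReal hane, mul_comm]
  rw [hconst, ← lintegral_add_right _ measurable_const]
  refine setLIntegral_congr_fun measurableSet_Ioo (fun s hs => ?_)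
  rw [← k_min_gt ν (ENNReal.ofReal s), ← k_min_gt ν a]
  have hsa : ENNReal.ofReal s < a := by
    rw [← ENNReal.ofReal_toReal hane]
    exact ENNReal.ofReal_lt_ofReal_iff hapos |>.mpr hs.2
  rw [← measure_union (by
      intro u hu1 hu2 q hq
      exact absurd ((hu1 hq) : _ ∧ _).2 (not_le.mpr (hu2 hq)))
    (measurableSet_lt measurable_const measurable_mn)]
  congr 1
  ext q
  simp only [mem_union, mem_setOf_eq]
  constructor
  · rintro (⟨h1, _⟩ | h2)
    · exact h1
    · exact lt_trans hsa h2
  · intro h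
    rcases le_or_gt (mn q) a with h2 | h2
    · exact Or.inl ⟨h, h2⟩
    · exact Or.inr h2

noncomputable def Cint (ν : Measure ℝ≥0∞) (c : ℝ≥0∞) : ℝ≥0∞ := ∫⁻ m in Iic c, m⁻¹ ∂ν

lemma Cint_eq (ν : Measure ℝ≥0∞) (c : ℝ≥0∞) :
    Cint ν c = ∫⁻ m, (Iic c).indicator (fun m => m⁻¹) m ∂ν := by
  rw [Cint, lintegral_indicator measurableSet_Iic]

lemma volT {a : ℝ≥0∞} (ha : a ≤ 1) (m : ℝ≥0∞) :
    volume (Ioo (0:ℝ) a.toReal ∩ {s : ℝ | m ≤ ENNReal.ofReal s}) = a - m := by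
  have hane : a ≠ ⊤ := ne_top_of_le_one ha
  rcases eq_or_ne m ⊤ with rfl | hmne
  · have : Ioo (0:ℝ) a.toReal ∩ {s : ℝ | (⊤:ℝ≥0∞) ≤ ENNReal.ofReal s} = ∅ := by
      ext s
      simp only [mem_inter_iff, mem_setOf_eq, mem_empty_iff_false, iff_false, not_and, top_le_iff]
      exact fun _ => (ENNReal.ofReal_ne_top)
    rw [this, measure_empty, ENNReal.sub_top]
  · rcases eq_or_ne m 0 with rfl | hm0
    · have : Ioo (0:ℝ) a.toReal ∩ {s : ℝ | (0:ℝ≥0∞) ≤ ENNReal.ofReal s} = Ioo 0 a.toReal := by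
        apply inter_eq_left.mpr
        intro s _; simp
      rw [this, Real.volume_Ioo, sub_zero, ENNReal.ofReal_toReal hane, tsub_zero]
    · have hmpos : 0 < m.toReal := ENNReal.toReal_pos hm0 hmne
      have hset : Ioo (0:ℝ) a.toReal ∩ {s : ℝ | m ≤ ENNReal.ofReal s} = Ico m.toReal a.toReal := by
        ext s
        simp only [mem_inter_iff, mem_Ioo, mem_setOf_eq, mem_Ico]
        constructor
        · rintro ⟨⟨hs0, hsa⟩, hms⟩
          rw [ENNReal.le_ofReal_iff_toReal_le hmne (le_of_lt hs0)] at hms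
          exact ⟨hms, hsa⟩
        · rintro ⟨hms, hsa⟩
          refine ⟨⟨lt_of_lt_of_le hmpos hms, hsa⟩, ?_⟩
          rw [ENNReal.le_ofReal_iff_toReal_le hmne (le_trans (le_of_lt hmpos) hms)]
          exact hms
      rw [hset, Real.volume_Ico, ENNReal.ofReal_sub _ ENNReal.toReal_nonneg,
        ENNReal.ofReal_toReal hane, ENNReal.ofReal_toReal hmne]

lemma E2 (ν : Measure ℝ≥0∞) [IsProbabilityMeasure ν] (h3 : ν ({0} : Set ℝ≥0∞) = 0)
    {a : ℝ≥0∞} (ha : a ≤ 1) :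
    (∫⁻ s in Ioo (0:ℝ) a.toReal, Cint ν (ENNReal.ofReal s)) + ν (Iic a)
      = a * Cint ν a := by
  have hswap : (∫⁻ s in Ioo (0:ℝ) a.toReal, Cint ν (ENNReal.ofReal s))
      = ∫⁻ m, m⁻¹ * (a - m) ∂ν := by
    simp_rw [Cint_eq]
    rw [lintegral_lintegral_swap]
    · refine lintegral_congr fun m => ?_
      have hind : ∀ s : ℝ, (Iic (ENNReal.ofReal s)).indicator (fun m => m⁻¹) m
          = m⁻¹ * ({s : ℝ | m ≤ ENNReal.ofReal s}).indicator 1 s := by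
        intro s
        by_cases h : m ≤ ENNReal.ofReal s
        · rw [Set.indicator_of_mem (show m ∈ Iic _ from h),
            Set.indicator_of_mem (show s ∈ {s : ℝ | m ≤ ENNReal.ofReal s} from h)]
          simp
        · rw [Set.indicator_of_notMem (show m ∉ Iic _ from h),
            Set.indicator_of_notMem (show s ∉ {s : ℝ | m ≤ ENNReal.ofReal s} from h)]
          simp
      simp_rw [hind]
      rw [lintegral_const_mul _ (measurable_one.indicator (measurableSet_le measurable_const
        ENNReal.measurable_ofReal)), lintegral_indicator_one (measurableSet_le measurable_const
        ENNReal.measurable_ofReal)]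
      rw [Measure.restrict_apply' measurableSet_Ioo]
      rw [show {s : ℝ | m ≤ ENNReal.ofReal s} ∩ Ioo (0:ℝ) a.toReal
          = Ioo (0:ℝ) a.toReal ∩ {s : ℝ | m ≤ ENNReal.ofReal s} from inter_comm _ _]
      rw [volT ha m]
    · apply Measurable.aemeasurable
      have : (Function.uncurry fun (s : ℝ) (m : ℝ≥0∞) =>
          (Iic (ENNReal.ofReal s)).indicator (fun m => m⁻¹) m)
          = fun p : ℝ × ℝ≥0∞ => if p.2 ≤ ENNReal.ofReal p.1 then p.2⁻¹ else 0 := by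
        funext p
        rw [Function.uncurry]
        by_cases h : p.2 ≤ ENNReal.ofReal p.1
        · rw [Set.indicator_of_mem (show p.2 ∈ Iic _ from h), if_pos h]
        · rw [Set.indicator_of_notMem (show p.2 ∉ Iic _ from h), if_neg h]
      rw [this]
      exact Measurable.ite (measurableSet_le measurable_snd
        (ENNReal.measurable_ofReal.comp measurable_fst)) measurable_snd.inv measurable_const
  rw [hswap, ← lintegral_indicator_one measurableSet_Iic,
    ← lintegral_add_right _ (measurable_one.indicator measurableSet_Iic),
    Cint_eq, ← lintegral_const_mul _ (measurable_inv.indicator measurableSet_Iic)]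
  have hae : ∀ᵐ m ∂ν, m ∉ ({0} : Set ℝ≥0∞) := measure_eq_zero_iff_ae_notMem.mp h3
  refine lintegral_congr_ae (hae.mono fun m hm => ?_)
  dsimp only
  have hm0 : m ≠ 0 := by simpa using hm
  by_cases h : m ≤ a
  · rw [Set.indicator_of_mem (show m ∈ Iic a from h), Set.indicator_of_mem (show m ∈ Iic a from h)]
    have hmne : m ≠ ⊤ := ne_top_of_le_ne_top (ne_top_of_le_one ha) h
    calc m⁻¹ * (a - m) + 1 = m⁻¹ * (a - m) + m⁻¹ * m := by
          rw [ENNReal.inv_mul_cancel hm0 hmne]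
      _ = m⁻¹ * ((a - m) + m) := by rw [mul_add]
      _ = m⁻¹ * a := by rw [tsub_add_cancel_of_le h]
      _ = a * m⁻¹ := mul_comm _ _
  · rw [Set.indicator_of_notMem (show m ∉ Iic a from h),
      Set.indicator_of_notMem (show m ∉ Iic a from h)]
    rw [tsub_eq_zero_of_le (le_of_lt (not_le.mp h)), mul_zero, mul_zero, add_zero]

lemma ISum (ν : Measure ℝ≥0∞) [IsProbabilityMeasure ν] {a : ℝ≥0∞} (ha : a ≤ 1)
    (hE3 : ∀ c : ℝ≥0∞, 0 < c → c ≤ 1 → Cint ν c + (ν (Ioi c))^2 = 1) :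
    (∫⁻ s in Ioo (0:ℝ) a.toReal, (ν (Ioi (ENNReal.ofReal s)))^2)
      + (∫⁻ s in Ioo (0:ℝ) a.toReal, Cint ν (ENNReal.ofReal s)) = a := by
  have hmeas : Measurable fun s : ℝ => (ν (Ioi (ENNReal.ofReal s)))^2 := by
    have hanti : Antitone fun s : ℝ => (ν (Ioi (ENNReal.ofReal s)))^2 := by
      intro s s' hss'
      exact pow_le_pow_left' (measure_mono (Ioi_subset_Ioi (ENNReal.ofReal_le_ofReal hss'))) 2
    exact hanti.measurable
  rw [← lintegral_add_left hmeas]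
  have htoReal : a.toReal ≤ 1 := by
    rw [← ENNReal.toReal_one]
    exact ENNReal.toReal_mono ENNReal.one_ne_top ha
  have hcongr : ∫⁻ s in Ioo (0:ℝ) a.toReal,
      ((ν (Ioi (ENNReal.ofReal s)))^2 + Cint ν (ENNReal.ofReal s))
      = ∫⁻ _ in Ioo (0:ℝ) a.toReal, (1:ℝ≥0∞) := by
    refine setLIntegral_congr_fun measurableSet_Ioo (fun s hs => ?_)
    rw [add_comm]
    have hs1 : ENNReal.ofReal s ≤ 1 := by
      rw [← ENNReal.ofReal_one]
      exact ENNReal.ofReal_le_ofReal (le_of_lt (lt_of_lt_of_le hs.2 htoReal))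
    exact hE3 (ENNReal.ofReal s) (ENNReal.ofReal_pos.mpr hs.1) hs1
  rw [hcongr, setLIntegral_const, one_mul, Real.volume_Ioo, sub_zero,
    ENNReal.ofReal_toReal (ne_top_of_le_one ha)]

lemma keyle (ν : Measure ℝ≥0∞) [IsProbabilityMeasure ν] (h3 : ν ({0} : Set ℝ≥0∞) = 0)
    (hE3 : ∀ c : ℝ≥0∞, 0 < c → c ≤ 1 → Cint ν c + (ν (Ioi c))^2 = 1)
    {a : ℝ≥0∞} (ha : a ≤ 1) :
    Measure.map gam (lam.prod (ν.prod ν)) (Iic a) = ν (Iic a) := by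
  rcases eq_or_ne a 0 with rfl | ha0
  · rw [map_Iic_le_one ν (zero_le_one)]
    have hz : ∀ q : ℝ≥0∞ × ℝ≥0∞, (Iic (0:ℝ≥0∞)).indicator (fun m => m) (mn q) = 0 := by
      intro q
      by_cases h : mn q ∈ Iic (0:ℝ≥0∞)
      · rw [Set.indicator_of_mem h]
        simpa using h
      · rw [Set.indicator_of_notMem h]
    simp_rw [hz]
    rw [lintegral_zero]
    have : Iic (0:ℝ≥0∞) = {0} := by ext z; simp [le_zero_iff]
    rw [this, h3]
  · have hmap := map_Iic_le_one ν ha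
    set A := ∫⁻ q, (Iic a).indicator (fun m => m) (mn q) ∂(ν.prod ν) with hA
    have e1 := E1 ν ha ha0
    have e2 := E2 ν h3 ha
    have isum := ISum ν ha hE3
    have e3a := hE3 a (pos_iff_ne_zero.mpr ha0) ha
    have chain : A + a = ν (Iic a) + a := by
      calc A + a = A + a * (Cint ν a + (ν (Ioi a))^2) := by rw [e3a, mul_one]
        _ = (A + a * (ν (Ioi a))^2) + a * Cint ν a := by ring
        _ = (∫⁻ s in Ioo (0:ℝ) a.toReal, (ν (Ioi (ENNReal.ofReal s)))^2) + a * Cint ν a := by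
              rw [e1]
        _ = (∫⁻ s in Ioo (0:ℝ) a.toReal, (ν (Ioi (ENNReal.ofReal s)))^2)
              + ((∫⁻ s in Ioo (0:ℝ) a.toReal, Cint ν (ENNReal.ofReal s)) + ν (Iic a)) := by
              rw [e2]
        _ = ((∫⁻ s in Ioo (0:ℝ) a.toReal, (ν (Ioi (ENNReal.ofReal s)))^2)
              + (∫⁻ s in Ioo (0:ℝ) a.toReal, Cint ν (ENNReal.ofReal s))) + ν (Iic a) := by
              ring
        _ = a + ν (Iic a) := by rw [isum]
        _ = ν (Iic a) + a := add_comm _ _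
    rw [hmap]
    exact (ENNReal.add_left_inj (ne_top_of_le_one ha)).mp chain

lemma min_good {x y : ℝ≥0∞} (hx : x ≤ 1 ∨ x = ⊤) (hy : y ≤ 1 ∨ y = ⊤) :
    min x y ≤ 1 ∨ min x y = ⊤ := by
  rcases hx with hx | hx
  · exact Or.inl (le_trans (min_le_left _ _) hx)
  · rcases hy with hy | hy
    · exact Or.inl (le_trans (min_le_right _ _) hy)
    · exact Or.inr (by rw [hx, hy]; simp)

lemma ae_good (ν : Measure ℝ≥0∞) [IsProbabilityMeasure ν]
    (h2 : ν {x : ℝ≥0∞ | 1 < x ∧ x ≠ ⊤} = 0) :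
    ∀ᵐ q ∂(ν.prod ν), (q.1 ≤ 1 ∨ q.1 = ⊤) ∧ (q.2 ≤ 1 ∨ q.2 = ⊤) := by
  rw [ae_iff]
  have hsub : {q : ℝ≥0∞ × ℝ≥0∞ | ¬((q.1 ≤ 1 ∨ q.1 = ⊤) ∧ (q.2 ≤ 1 ∨ q.2 = ⊤))}
      ⊆ ({x : ℝ≥0∞ | 1 < x ∧ x ≠ ⊤} ×ˢ univ) ∪ (univ ×ˢ {x : ℝ≥0∞ | 1 < x ∧ x ≠ ⊤}) := by
    intro q hq
    simp only [mem_setOf_eq, not_and_or, not_or] at hq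
    rcases hq with ⟨h1, h2⟩ | ⟨h1, h2⟩
    · exact Or.inl ⟨⟨not_le.mp h1, h2⟩, mem_univ _⟩
    · exact Or.inr ⟨mem_univ _, not_le.mp h1, h2⟩
  refine le_antisymm (le_trans (measure_mono hsub) ?_) zero_le
  refine le_trans (measure_union_le _ _) ?_
  rw [Measure.prod_prod, Measure.prod_prod, h2]
  simp

lemma key (ν : Measure ℝ≥0∞) [IsProbabilityMeasure ν]
    (h2 : ν {x : ℝ≥0∞ | 1 < x ∧ x ≠ ⊤} = 0) (h3 : ν ({0} : Set ℝ≥0∞) = 0)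
    (hE3 : ∀ c : ℝ≥0∞, 0 < c → c ≤ 1 → Cint ν c + (ν (Ioi c))^2 = 1) :
    Measure.map gam (lam.prod (ν.prod ν)) = ν := by
  haveI : IsProbabilityMeasure (Measure.map gam (lam.prod (ν.prod ν))) :=
    Measure.isProbabilityMeasure_map measurable_gam.aemeasurable
  refine Measure.ext_of_Iic _ _ (fun a => ?_)
  rcases eq_or_ne a ⊤ with rfl | hane
  · have : Iic (⊤:ℝ≥0∞) = univ := by ext z; simp [le_top]
    rw [this, measure_univ, measure_univ]
  rcases le_or_gt a 1 with ha1 | ha1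
  · exact keyle ν h3 hE3 ha1
  · have hIic : ν (Iic a) = ν (Iic 1) := by
      have hun : Iic a = Iic 1 ∪ Ioc 1 a := (Iic_union_Ioc_eq_Iic ha1.le).symm
      have hnull : ν (Ioc 1 a) = 0 := by
        refine measure_mono_null (fun z hz => ?_) h2
        exact ⟨hz.1, (lt_of_le_of_lt hz.2 (lt_top_iff_ne_top.mpr hane)).ne⟩
      rw [hun, measure_union ?_ measurableSet_Ioc, hnull, add_zero]
      exact fun u hu1 hu2 z hz => absurd ((hu1 hz) : z ≤ 1) (not_le.mpr ((hu2 hz) : _ ∧ _).1)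
    have hmapa : Measure.map gam (lam.prod (ν.prod ν)) (Iic a)
        = ∫⁻ q, (Iic (1:ℝ≥0∞)).indicator (fun m => m) (mn q) ∂(ν.prod ν) := by
      rw [map_apply_set ν measurableSet_Iic]
      refine lintegral_congr_ae ((ae_good ν h2).mono fun q hq => ?_)
      have hmng : mn q ≤ 1 ∨ mn q = ⊤ := min_good hq.1 hq.2
      have htopa : (⊤:ℝ≥0∞) ∉ Iic a := by
        simp only [mem_Iic, top_le_iff]; exact hane
      dsimp only
      rw [Set.indicator_of_notMem htopa, mul_zero, add_zero]
      rcases hmng with hle | htop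
      · have h1 : mn q ∈ Iic a := le_trans hle ha1.le
        rw [Set.indicator_of_mem h1, Set.indicator_of_mem (show mn q ∈ Iic 1 from hle),
          Pi.one_apply, mul_one, min_eq_left hle]
      · have h1 : mn q ∉ Iic a := by
          rw [htop]; simp only [mem_Iic, top_le_iff]; exact hane
        have h2' : mn q ∉ Iic (1:ℝ≥0∞) := by rw [htop]; simp
        rw [Set.indicator_of_notMem h1, Set.indicator_of_notMem h2', mul_zero]
    rw [hmapa, ← map_Iic_le_one ν le_rfl, keyle ν h3 hE3 le_rfl, hIic]

lemma good_of_not_bad {x : ℝ≥0∞} (h : x ∉ {x : ℝ≥0∞ | 1 < x ∧ x ≠ ⊤}) :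
    x ≤ 1 ∨ x = ⊤ := by
  simp only [mem_setOf_eq, not_and_or, not_lt, not_not] at h
  exact h

lemma bad_measurable : MeasurableSet {x : ℝ≥0∞ | 1 < x ∧ x ≠ ⊤} := by
  have : {x : ℝ≥0∞ | 1 < x ∧ x ≠ ⊤} = Ioi 1 ∩ ({⊤} : Set ℝ≥0∞)ᶜ := by
    ext x; simp [mem_Ioi, and_comm]
  rw [this]
  exact measurableSet_Ioi.inter (measurableSet_singleton _).compl

lemma toReal_le_one {x : ℝ≥0∞} (hx : x ≤ 1) : x.toReal ≤ 1 := by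
  rw [← ENNReal.toReal_one]
  exact ENNReal.toReal_mono ENNReal.one_ne_top hx

lemma two_sub_pos {x : ℝ≥0∞} (hx : x ≤ 1) : (0:ℝ) < 2 - x.toReal := by
  have := toReal_le_one hx
  linarith

lemma Hmap_eq {x : ℝ≥0∞} (hx : x ≤ 1) :
    Hmap x = ENNReal.ofReal (1/(2 - x.toReal)) := by
  rw [Hmap, if_neg (ne_top_of_le_one hx)]

lemma Hmap_top : Hmap ⊤ = ⊤ := by rw [Hmap, if_pos rfl]

lemma Hmap_le_one {x : ℝ≥0∞} (hx : x ≤ 1) : Hmap x ≤ 1 := by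
  rw [Hmap_eq hx, ← ENNReal.ofReal_one]
  apply ENNReal.ofReal_le_ofReal
  rw [div_le_one (two_sub_pos hx)]
  have h1 := toReal_le_one hx
  linarith

lemma Hmap_ge_half {x : ℝ≥0∞} (hx : x ≤ 1) : ENNReal.ofReal (1/2) ≤ Hmap x := by
  rw [Hmap_eq hx]
  apply ENNReal.ofReal_le_ofReal
  have h1 : (0:ℝ) < 2 - x.toReal := two_sub_pos hx
  have h2 : 2 - x.toReal ≤ 2 := by
    have : (0:ℝ) ≤ x.toReal := ENNReal.toReal_nonneg
    linarith
  calc 1/2 ≤ 1/(2 - x.toReal) := one_div_le_one_div_of_le h1 h2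
    _ = 1/(2 - x.toReal) := rfl

lemma Hmap_ne_zero {x : ℝ≥0∞} (hx : x ≤ 1) : Hmap x ≠ 0 := by
  refine ne_of_gt (lt_of_lt_of_le ?_ (Hmap_ge_half hx))
  exact ENNReal.ofReal_pos.mpr (by norm_num)

lemma Hmap_le_iff {x : ℝ≥0∞} (hx : x ≤ 1) {r : ℝ} (hr : 1/2 ≤ r) (hr1 : r ≤ 1) :
    (Hmap x ≤ ENNReal.ofReal r ↔ x ≤ ENNReal.ofReal (2 - 1/r)) := by
  have hrpos : 0 < r := lt_of_lt_of_le (by norm_num) hr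
  have h2x : (0:ℝ) < 2 - x.toReal := two_sub_pos hx
  have hx0 : (0:ℝ) ≤ x.toReal := ENNReal.toReal_nonneg
  rw [Hmap_eq hx, ENNReal.ofReal_le_ofReal_iff (le_of_lt hrpos)]
  rw [show x = ENNReal.ofReal x.toReal from (ENNReal.ofReal_toReal (ne_top_of_le_one hx)).symm]
  rw [ENNReal.ofReal_le_ofReal_iff (by
    have : 1/r ≤ 2 := by rw [div_le_iff₀ hrpos]; linarith
    linarith)]
  rw [ENNReal.toReal_ofReal hx0]
  constructor
  · intro h
    have h1 : 1 ≤ r * (2 - x.toReal) := (div_le_iff₀ h2x).mp h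
    have h2 : 1/r ≤ 2 - x.toReal := by
      rw [div_le_iff₀ hrpos]
      nlinarith
    linarith
  · intro h
    have h2 : 1/r ≤ 2 - x.toReal := by linarith
    have h1 : 1 ≤ r * (2 - x.toReal) := by
      have := (div_le_iff₀ hrpos).mp h2
      nlinarith
    rw [div_le_iff₀ h2x]
    nlinarith

lemma Hmap_inv_eq {x : ℝ≥0∞} (hx : x ≤ 1) : (Hmap x)⁻¹ = 2 - x := by
  have h2x : (0:ℝ) < 2 - x.toReal := two_sub_pos hx
  have hy : (0:ℝ) < 1/(2 - x.toReal) := by positivity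
  rw [Hmap_eq hx, ← ENNReal.ofReal_inv_of_pos hy]
  rw [one_div, inv_inv]
  rw [ENNReal.ofReal_sub _ ENNReal.toReal_nonneg, ENNReal.ofReal_toReal (ne_top_of_le_one hx)]
  norm_num

lemma juggle2 {C g Gb : ℝ≥0∞} (h1 : C + g^2 = 2*g) (h2 : g + Gb = 1) : C + Gb^2 = 1 := by
  have hgne : g ≠ ⊤ := by
    intro h; rw [h, top_add] at h2; exact ENNReal.top_ne_one h2
  have hCeq : C = g^2 + 2*g*Gb := by
    have hkey : g^2 + C = g^2 + (g^2 + 2*g*Gb) := by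
      rw [add_comm (g^2) C, h1]
      calc 2*g = 2*g*(g+Gb) := by rw [h2, mul_one]
        _ = g^2 + (g^2 + 2*g*Gb) := by ring
    exact (ENNReal.add_right_inj (ENNReal.pow_ne_top hgne)).mp hkey
  rw [hCeq]
  calc g^2 + 2*g*Gb + Gb^2 = (g + Gb)^2 := by ring
    _ = 1 := by rw [h2, one_pow]

lemma dir1 (μ : Measure ℝ≥0∞) [IsProbabilityMeasure μ]
    (hsupp : μ {x : ℝ≥0∞ | 1 < x ∧ x ≠ ⊤} = 0)
    (hchi : ∀ t ∈ Set.Icc (0:ℝ) 1,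
      ∫⁻ s in Set.Icc 0 (ENNReal.ofReal t), s ∂μ = (μ (Set.Icc 0 (ENNReal.ofReal t)))^2) :
    Measure.map gam (lam.prod ((Measure.map Hmap μ).prod (Measure.map Hmap μ)))
      = Measure.map Hmap μ := by
  set ν := Measure.map Hmap μ with hν
  haveI : IsProbabilityMeasure ν := Measure.isProbabilityMeasure_map measurable_Hmap.aemeasurable
  have hmu_ae : ∀ᵐ x ∂μ, x ≤ 1 ∨ x = ⊤ := by
    rw [ae_iff]
    refine measure_mono_null (fun x hx => ?_) hsupp
    simp only [mem_setOf_eq, not_or, not_le] at hx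
    exact ⟨hx.1, hx.2⟩
  have h2' : ν {x : ℝ≥0∞ | 1 < x ∧ x ≠ ⊤} = 0 := by
    rw [hν, Measure.map_apply measurable_Hmap bad_measurable]
    refine measure_mono_null (fun x hx => ?_) hsupp
    by_contra hxb
    rcases good_of_not_bad hxb with hx1 | hxtop
    · exact absurd ((hx : _ ∧ _).1) (not_lt.mpr (Hmap_le_one hx1))
    · rw [mem_preimage, hxtop, Hmap_top] at hx
      exact (hx : _ ∧ _).2 rfl
  have h3' : ν ({0} : Set ℝ≥0∞) = 0 := by
    rw [hν, Measure.map_apply measurable_Hmap (measurableSet_singleton _)]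
    refine measure_mono_null (fun x hx => ?_) hsupp
    by_contra hxb
    rcases good_of_not_bad hxb with hx1 | hxtop
    · exact Hmap_ne_zero hx1 (by simpa using hx)
    · rw [mem_preimage, hxtop, Hmap_top] at hx
      simp at hx
  have hE3 : ∀ c : ℝ≥0∞, 0 < c → c ≤ 1 → Cint ν c + (ν (Ioi c))^2 = 1 := by
    intro c hc0 hc1
    have hcne : c ≠ ⊤ := ne_top_of_le_one hc1
    have hrpos : 0 < c.toReal := ENNReal.toReal_pos hc0.ne' hcne
    have hr1 : c.toReal ≤ 1 := toReal_le_one hc1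
    rcases lt_or_ge c.toReal (1/2) with hrhalf | hrhalf
    · have hIicnull : ν (Iic c) = 0 := by
        rw [hν, Measure.map_apply measurable_Hmap measurableSet_Iic]
        refine measure_mono_null (fun x hx => ?_) hsupp
        by_contra hxb
        rcases good_of_not_bad hxb with hx1 | hxtop
        · have hgel := Hmap_ge_half hx1
          have hclt : c < ENNReal.ofReal (1/2) := by
            rw [← ENNReal.ofReal_toReal hcne]
            exact (ENNReal.ofReal_lt_ofReal_iff (by norm_num)).mpr hrhalf
          exact absurd (le_trans hgel (mem_Iic.mp (mem_preimage.mp hx))) (not_le.mpr hclt)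
        · rw [mem_preimage, hxtop, Hmap_top, mem_Iic, top_le_iff] at hx
          exact hcne hx
      have hCzero : Cint ν c = 0 := by
        rw [Cint]; exact setLIntegral_measure_zero _ _ hIicnull
      have hIoi : ν (Ioi c) = 1 := by
        rw [← compl_Iic, prob_compl_eq_one_sub measurableSet_Iic, hIicnull, tsub_zero]
      rw [hCzero, hIoi, zero_add, one_pow]
    · set t : ℝ := 2 - 1/c.toReal with ht
      have hinvr1 : 1/c.toReal ≤ 2 := by rw [div_le_iff₀ hrpos]; linarith
      have hinvr2 : 1 ≤ 1/c.toReal := by rw [le_div_iff₀ hrpos]; linarith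
      have ht0 : 0 ≤ t := by rw [ht]; linarith
      have ht1 : t ≤ 1 := by rw [ht]; linarith
      set T := ENNReal.ofReal t with hT
      have hTne : T ≠ ⊤ := ENNReal.ofReal_ne_top
      have hT1 : T ≤ 1 := by
        rw [hT, ← ENNReal.ofReal_one]; exact ENNReal.ofReal_le_ofReal ht1
      have hsetiff : ∀ x : ℝ≥0∞, (x ≤ 1 ∨ x = ⊤) → (Hmap x ≤ c ↔ x ≤ T) := by
        intro x hx
        rcases hx with hx1 | hxtop
        · rw [show c = ENNReal.ofReal c.toReal from (ENNReal.ofReal_toReal hcne).symm]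
          exact Hmap_le_iff hx1 hrhalf hr1
        · rw [hxtop, Hmap_top]
          constructor
          · intro h; exact absurd (top_le_iff.mp h) hcne
          · intro h; exact absurd (top_le_iff.mp h) hTne
      have hGF : ν (Iic c) = μ (Iic T) := by
        rw [hν, Measure.map_apply measurable_Hmap measurableSet_Iic]
        refine measure_congr (hmu_ae.mono fun x hx => eq_iff_iff.mpr ?_)
        show Hmap x ≤ c ↔ x ≤ T
        exact hsetiff x hx
      have hCC : Cint ν c = ∫⁻ x in Iic T, (2 - x) ∂μ := by
        rw [Cint, hν, setLIntegral_map measurableSet_Iic measurable_inv measurable_Hmap]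
        rw [← lintegral_indicator (measurable_Hmap measurableSet_Iic),
          ← lintegral_indicator measurableSet_Iic]
        refine lintegral_congr_ae (hmu_ae.mono fun x hx => ?_)
        by_cases hm : x ∈ Iic T
        · have hx1 : x ≤ 1 := le_trans (mem_Iic.mp hm) hT1
          have hm' : Hmap x ≤ c := (hsetiff x hx).mpr hm
          rw [Set.indicator_of_mem (show x ∈ Hmap ⁻¹' (Iic c) from hm'),
            Set.indicator_of_mem hm]
          exact Hmap_inv_eq hx1
        · have hm' : x ∉ Hmap ⁻¹' (Iic c) := fun h => hm ((hsetiff x hx).mp h)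
          rw [Set.indicator_of_notMem hm', Set.indicator_of_notMem hm]
      have hFint : (∫⁻ x in Iic T, (2 - x) ∂μ) + (μ (Iic T))^2 = 2 * μ (Iic T) := by
        have hIccIic : Icc (0:ℝ≥0∞) T = Iic T := by ext z; simp [zero_le]
        have hchiT := hchi t ⟨ht0, ht1⟩
        rw [← hT, hIccIic] at hchiT
        have hadd : (∫⁻ x in Iic T, (2 - x) ∂μ) + (∫⁻ x in Iic T, x ∂μ)
            = ∫⁻ x in Iic T, ((2 - x) + x) ∂μ := by
          rw [← lintegral_add_right _ measurable_id']
        have hconst : ∫⁻ x in Iic T, ((2 - x) + x) ∂μ = 2 * μ (Iic T) := by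
          rw [setLIntegral_congr_fun measurableSet_Iic
            (fun x hx => tsub_add_cancel_of_le (le_trans (mem_Iic.mp hx)
              (le_trans hT1 (by norm_num)))), setLIntegral_const]
        rw [← hchiT, hadd, hconst]
      have hsum : ν (Iic c) + ν (Ioi c) = 1 := by
        rw [← compl_Iic, measure_add_measure_compl measurableSet_Iic, measure_univ]
      refine juggle2 ?_ hsum
      rw [hCC, hGF]
      exact hFint
  exact key ν h2' h3' hE3

lemma juggle3 {C g Gb : ℝ≥0∞} (h1 : C + Gb^2 = 1) (h2 : g + Gb = 1) : C + g^2 = 2*g := by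
  have hGbne : Gb ≠ ⊤ := by
    intro h; rw [h, add_top] at h2; exact ENNReal.top_ne_one h2
  have hCeq : C = g^2 + 2*g*Gb := by
    have hkey : Gb^2 + C = Gb^2 + (g^2 + 2*g*Gb) := by
      rw [add_comm (Gb^2) C, h1]
      calc (1:ℝ≥0∞) = (g + Gb)^2 := by rw [h2, one_pow]
        _ = Gb^2 + (g^2 + 2*g*Gb) := by ring
    exact (ENNReal.add_right_inj (ENNReal.pow_ne_top hGbne)).mp hkey
  rw [hCeq]
  calc g^2 + 2*g*Gb + g^2 = 2*g*(g + Gb) := by ring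
    _ = 2*g := by rw [h2, mul_one]

lemma Hinv_top : Hinv ⊤ = ⊤ := by rw [Hinv, if_pos rfl]

lemma Hinv_eq {y : ℝ≥0∞} (hy : y ≠ ⊤) : Hinv y = ENNReal.ofReal (2 - 1/y.toReal) := by
  rw [Hinv, if_neg hy]

lemma Iic_zero_enn : Iic (0:ℝ≥0∞) = {0} := by ext z; simp [le_zero_iff]

lemma Iic_eq_union (a : ℝ≥0∞) : Iic a = {0} ∪ Ioc 0 a := by
  ext z
  simp only [mem_Iic, mem_union, mem_singleton_iff, mem_Ioc]
  constructor
  · intro h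
    rcases eq_or_ne z 0 with rfl | hz
    · exact Or.inl rfl
    · exact Or.inr ⟨pos_iff_ne_zero.mpr hz, h⟩
  · rintro (rfl | ⟨_, h⟩)
    · exact zero_le
    · exact h

lemma disj_zero_Ioc (a : ℝ≥0∞) : Disjoint ({0} : Set ℝ≥0∞) (Ioc 0 a) := by
  rw [Set.disjoint_left]
  rintro z rfl hz
  exact lt_irrefl 0 ((mem_Ioc.mp hz).1)

section Dir2

variable (ν : Measure ℝ≥0∞) [IsProbabilityMeasure ν]

lemma map_gam_Iic_zero :
    Measure.map gam (lam.prod (ν.prod ν)) (Iic 0) = 0 := by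
  rw [map_Iic_le_one ν (zero_le_one)]
  have hz : ∀ q : ℝ≥0∞ × ℝ≥0∞, (Iic (0:ℝ≥0∞)).indicator (fun m => m) (mn q) = 0 := by
    intro q
    by_cases h : mn q ∈ Iic (0:ℝ≥0∞)
    · rw [Set.indicator_of_mem h]; simpa using h
    · rw [Set.indicator_of_notMem h]
  simp_rw [hz]
  exact lintegral_zero

lemma dir2_zero (hrde : Measure.map gam (lam.prod (ν.prod ν)) = ν) :
    ν ({0} : Set ℝ≥0∞) = 0 := by
  rw [← Iic_zero_enn, ← hrde]
  exact map_gam_Iic_zero ν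

lemma dir2_low (hrde : Measure.map gam (lam.prod (ν.prod ν)) = ν)
    {c : ℝ≥0∞} (hc1 : c ≤ 1) (hc : 2 * c < 1) : ν (Iic c) = 0 := by
  have hmap := map_Iic_le_one ν hc1
  rw [hrde] at hmap
  have hbound : ν (Iic c) ≤ (2 * c) * ν (Iic c) := by
    calc ν (Iic c) = ∫⁻ q, (Iic c).indicator (fun m => m) (mn q) ∂(ν.prod ν) := hmap
      _ ≤ ∫⁻ q, c * (Iic c).indicator 1 (mn q) ∂(ν.prod ν) := by
          refine lintegral_mono fun q => ?_
          by_cases h : mn q ∈ Iic c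
          · rw [Set.indicator_of_mem h, Set.indicator_of_mem h, Pi.one_apply, mul_one]
            exact mem_Iic.mp h
          · rw [Set.indicator_of_notMem h, Set.indicator_of_notMem h, mul_zero]
      _ = c * (ν.prod ν) (mn ⁻¹' (Iic c)) := by
          rw [lintegral_const_mul c (show Measurable fun q : ℝ≥0∞ × ℝ≥0∞ =>
            (Iic c).indicator (1 : ℝ≥0∞ → ℝ≥0∞) (mn q) from
            (measurable_one.indicator measurableSet_Iic).comp measurable_mn)]
          congr 1
          have : (fun q => (Iic c).indicator (1 : ℝ≥0∞ → ℝ≥0∞) (mn q))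
              = (mn ⁻¹' (Iic c)).indicator 1 := by
            funext q
            by_cases h : mn q ∈ Iic c
            · rw [Set.indicator_of_mem h, Set.indicator_of_mem (show q ∈ mn ⁻¹' (Iic c) from h)]
              simp only [Pi.one_apply]
            · rw [Set.indicator_of_notMem h,
                Set.indicator_of_notMem (show q ∉ mn ⁻¹' (Iic c) from h)]
          rw [this, lintegral_indicator_one (measurable_mn measurableSet_Iic)]
      _ ≤ c * (2 * ν (Iic c)) := by
          refine mul_le_mul_right ?_ c
          have hsub : mn ⁻¹' (Iic c) ⊆ (Iic c ×ˢ univ) ∪ (univ ×ˢ Iic c) := by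
            intro q hq
            rcases min_le_iff.mp (show mn q ≤ c from hq) with h | h
            · exact Or.inl ⟨h, mem_univ _⟩
            · exact Or.inr ⟨mem_univ _, h⟩
          calc (ν.prod ν) (mn ⁻¹' (Iic c)) ≤ (ν.prod ν) ((Iic c ×ˢ univ) ∪ (univ ×ˢ Iic c)) :=
                measure_mono hsub
            _ ≤ (ν.prod ν) (Iic c ×ˢ univ) + (ν.prod ν) (univ ×ˢ Iic c) := measure_union_le _ _
            _ = 2 * ν (Iic c) := by
                rw [Measure.prod_prod, Measure.prod_prod, measure_univ, mul_one, one_mul,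
                  two_mul]
      _ = (2 * c) * ν (Iic c) := by ring
  by_contra hG0
  have hGne : ν (Iic c) ≠ ⊤ := (measure_lt_top ν _).ne
  have hlt : (2 * c) * ν (Iic c) < 1 * ν (Iic c) :=
    by rw [mul_comm _ (ν _), mul_comm 1]; exact ENNReal.mul_lt_mul_right hG0 hGne hc
  rw [one_mul] at hlt
  exact absurd hbound (not_le.mpr hlt)

lemma dir2_Iio (hrde : Measure.map gam (lam.prod (ν.prod ν)) = ν) :
    ν (Iio (2⁻¹ : ℝ≥0∞)) = 0 := by
  have hterm : ∀ n : ℕ, ν (Iic (ENNReal.ofReal (1/2 - 1/(n+1)))) = 0 := by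
    intro n
    set r : ℝ := 1/2 - 1/(n+1) with hr
    have hr1 : r ≤ 1 := by
      have : (0:ℝ) < 1/(n+1) := by positivity
      rw [hr]; linarith
    refine dir2_low ν hrde ?_ ?_
    · rw [← ENNReal.ofReal_one]; exact ENNReal.ofReal_le_ofReal hr1
    · rcases le_or_gt r 0 with h0 | h0
      · rw [ENNReal.ofReal_eq_zero.mpr h0, mul_zero]; norm_num
      · rw [two_mul, ← ENNReal.ofReal_add (le_of_lt h0) (le_of_lt h0)]
        have : r + r < 1 := by
          have : (0:ℝ) < 1/(n+1) := by positivity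
          rw [hr]; linarith
        calc ENNReal.ofReal (r + r) < ENNReal.ofReal 1 :=
              (ENNReal.ofReal_lt_ofReal_iff (by norm_num)).mpr this
          _ = 1 := ENNReal.ofReal_one
  have hsub : Iio (2⁻¹ : ℝ≥0∞) ⊆ ⋃ n : ℕ, Iic (ENNReal.ofReal (1/2 - 1/(n+1))) := by
    intro y hy
    have hyne : y ≠ ⊤ := by
      intro h; rw [h] at hy
      exact absurd (mem_Iio.mp hy) (by simp)
    have hylt : y.toReal < 1/2 := by
      have h2 : ((2:ℝ≥0∞)⁻¹).toReal = 1/2 := by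
        rw [ENNReal.toReal_inv]; norm_num
      rw [← h2]
      exact ENNReal.toReal_lt_toReal hyne (by simp) |>.mpr (mem_Iio.mp hy)
    have heps : 0 < 1/2 - y.toReal := by linarith
    obtain ⟨n, hn⟩ := exists_nat_one_div_lt heps
    refine mem_iUnion.mpr ⟨n, ?_⟩
    rw [mem_Iic, ← ENNReal.ofReal_toReal hyne]
    apply ENNReal.ofReal_le_ofReal
    have : (1:ℝ)/(n+1) < 1/2 - y.toReal := hn
    linarith
  refine le_antisymm (le_trans (measure_mono hsub) ?_) zero_le
  exact le_trans (measure_iUnion_le _) (le_of_eq (ENNReal.tsum_eq_zero.mpr hterm))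

lemma dir2_E3 (hrde : Measure.map gam (lam.prod (ν.prod ν)) = ν)
    {a : ℝ≥0∞} (ha1 : a ≤ 1) :
    Cint ν a + (ν (Ioi a))^2 = 1 := by
  have h0 := dir2_zero ν hrde
  have hane : a ≠ ⊤ := ne_top_of_le_one ha1
  have hCkey : Cint ν a = (ν.prod ν) (mn ⁻¹' (Ioc 0 a)) := by
    rw [Cint]
    conv_lhs => rw [← hrde]
    rw [setLIntegral_map measurableSet_Iic measurable_inv measurable_gam]
    rw [← lintegral_indicator (measurable_gam measurableSet_Iic)]
    have hpt : ∀ p, (gam ⁻¹' (Iic a)).indicator (fun p => (gam p)⁻¹) p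
        = ((Iic a).indicator (fun m => m⁻¹)) (gam p) := by
      intro p
      by_cases h : gam p ∈ Iic a
      · rw [Set.indicator_of_mem (show p ∈ gam ⁻¹' (Iic a) from h), Set.indicator_of_mem h]
      · rw [Set.indicator_of_notMem (show p ∉ gam ⁻¹' (Iic a) from h),
          Set.indicator_of_notMem h]
    simp_rw [hpt]
    rw [lint_gam ν (measurable_inv.indicator measurableSet_Iic)]
    have htop : ((Iic a).indicator (fun m => m⁻¹)) (⊤:ℝ≥0∞) = 0 := by
      refine Set.indicator_of_notMem ?_ _
      simp only [mem_Iic, top_le_iff]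
      exact hane
    have hq : ∀ q : ℝ≥0∞ × ℝ≥0∞,
        min (mn q) 1 * ((Iic a).indicator (fun m => m⁻¹)) (mn q)
          + (1 - min (mn q) 1) * ((Iic a).indicator (fun m => m⁻¹)) ⊤
        = (Ioc 0 a).indicator 1 (mn q) := by
      intro q
      rw [htop, mul_zero, add_zero]
      by_cases h : mn q ∈ Iic a
      · rw [Set.indicator_of_mem h, min_eq_left (le_trans (mem_Iic.mp h) ha1)]
        rcases eq_or_ne (mn q) 0 with hz | hz
        · rw [hz]
          rw [Set.indicator_of_notMem (by simp : (0:ℝ≥0∞) ∉ Ioc 0 a)]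
          simp
        · rw [ENNReal.mul_inv_cancel hz (ne_top_of_le_ne_top hane (mem_Iic.mp h))]
          rw [Set.indicator_of_mem (show mn q ∈ Ioc 0 a from
            ⟨pos_iff_ne_zero.mpr hz, mem_Iic.mp h⟩), Pi.one_apply]
      · rw [Set.indicator_of_notMem h, mul_zero]
        have : mn q ∉ Ioc 0 a := fun hmem => h (mem_Iic.mpr (mem_Ioc.mp hmem).2)
        rw [Set.indicator_of_notMem this]
    simp_rw [hq]
    have : (fun q => (Ioc 0 a).indicator (1 : ℝ≥0∞ → ℝ≥0∞) (mn q))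
        = (mn ⁻¹' (Ioc 0 a)).indicator 1 := by
      funext q
      by_cases h : mn q ∈ Ioc 0 a
      · rw [Set.indicator_of_mem h, Set.indicator_of_mem (show q ∈ mn ⁻¹' (Ioc 0 a) from h)]
        simp only [Pi.one_apply]
      · rw [Set.indicator_of_notMem h,
          Set.indicator_of_notMem (show q ∉ mn ⁻¹' (Ioc 0 a) from h)]
    rw [this, lintegral_indicator_one (measurable_mn measurableSet_Ioc)]
  have hzero_pre : (ν.prod ν) (mn ⁻¹' ({0} : Set ℝ≥0∞)) = 0 := by
    have hsub : mn ⁻¹' ({0} : Set ℝ≥0∞) ⊆ (({0} : Set ℝ≥0∞) ×ˢ univ) ∪ (univ ×ˢ ({0} : Set ℝ≥0∞)) := by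
      intro q hq
      have : min q.1 q.2 = 0 := hq
      rcases min_eq_iff.mp this with ⟨h, _⟩ | ⟨h, _⟩
      · exact Or.inl ⟨h, mem_univ _⟩
      · exact Or.inr ⟨mem_univ _, h⟩
    refine le_antisymm (le_trans (measure_mono hsub) ?_) zero_le
    refine le_trans (measure_union_le _ _) ?_
    rw [Measure.prod_prod, Measure.prod_prod, h0]
    simp
  have hIicsplit : (ν.prod ν) (mn ⁻¹' (Iic a)) = (ν.prod ν) (mn ⁻¹' (Ioc 0 a)) := by
    rw [Iic_eq_union a, preimage_union,
      measure_union (Disjoint.preimage mn (disj_zero_Ioc a)) (measurable_mn measurableSet_Ioc),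
      hzero_pre, zero_add]
  have hcompl : (ν.prod ν) (mn ⁻¹' (Iic a)) + (ν.prod ν) (mn ⁻¹' (Ioi a)) = 1 := by
    have : mn ⁻¹' (Ioi a) = (mn ⁻¹' (Iic a))ᶜ := by
      rw [← preimage_compl, compl_Iic]
    rw [this, measure_add_measure_compl (measurable_mn measurableSet_Iic), measure_univ]
  have hIoi : (ν.prod ν) (mn ⁻¹' (Ioi a)) = (ν (Ioi a))^2 := by
    rw [show mn ⁻¹' (Ioi a) = {q | a < mn q} from rfl]
    exact k_min_gt ν a
  rw [hCkey, ← hIicsplit, ← hIoi]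
  exact hcompl

end Dir2

lemma dir2 (ν : Measure ℝ≥0∞) [IsProbabilityMeasure ν]
    (hsupp : ν {x : ℝ≥0∞ | 1 < x ∧ x ≠ ⊤} = 0)
    (hrde : Measure.map gam (lam.prod (ν.prod ν)) = ν) :
    ∀ t ∈ Set.Icc (0:ℝ) 1,
      ∫⁻ s in Set.Icc 0 (ENNReal.ofReal t), s ∂(Measure.map Hinv ν)
        = ((Measure.map Hinv ν) (Set.Icc 0 (ENNReal.ofReal t)))^2 := by
  intro t ht
  obtain ⟨ht0, ht1⟩ := ht
  have h0 := dir2_zero ν hrde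
  have hIio := dir2_Iio ν hrde
  set r : ℝ := 1/(2 - t) with hr
  have h2t : (0:ℝ) < 2 - t := by linarith
  have hrpos : 0 < r := by rw [hr]; positivity
  have hrhalf : 1/2 ≤ r := by
    rw [hr]
    exact one_div_le_one_div_of_le h2t (by linarith)
  have hr1 : r ≤ 1 := by
    rw [hr, div_le_one h2t]; linarith
  set a : ℝ≥0∞ := ENNReal.ofReal r with ha
  have ha1 : a ≤ 1 := by rw [ha, ← ENNReal.ofReal_one]; exact ENNReal.ofReal_le_ofReal hr1
  have hane : a ≠ ⊤ := ENNReal.ofReal_ne_top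
  have haTo : a.toReal = r := ENNReal.toReal_ofReal (le_of_lt hrpos)
  set T : ℝ≥0∞ := ENNReal.ofReal t with hT
  have hTne : T ≠ ⊤ := ENNReal.ofReal_ne_top
  have hIccIic : Icc (0:ℝ≥0∞) T = Iic T := by ext z; simp [zero_le]
  have hpre : Hinv ⁻¹' (Iic T) = Ioc 0 a := by
    ext y
    simp only [mem_preimage, mem_Iic, mem_Ioc]
    rcases eq_or_ne y ⊤ with rfl | hyne
    · rw [Hinv_top]
      constructor
      · intro h; exact absurd (top_le_iff.mp h) hTne
      · rintro ⟨_, h⟩; exact absurd (top_le_iff.mp h) hane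
    · rcases eq_or_ne y 0 with rfl | hy0
      · rw [Hinv_eq (by simp : (0:ℝ≥0∞) ≠ ⊤)]
        constructor
        · intro h
          exfalso
          have h2 : (2:ℝ) - 1/(0:ℝ≥0∞).toReal = 2 := by
            simp
          rw [h2] at h
          have : (2:ℝ) ≤ t := (ENNReal.ofReal_le_ofReal_iff ht0).mp h
          linarith
        · rintro ⟨h, _⟩; exact absurd rfl (ne_of_gt h)
      · have hytoReal : 0 < y.toReal := ENNReal.toReal_pos hy0 hyne
        rw [Hinv_eq hyne]
        constructor
        · intro h
          have hreal : 2 - 1/y.toReal ≤ t := (ENNReal.ofReal_le_ofReal_iff ht0).mp h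
          have hy_le : y.toReal ≤ r := by
            rw [hr, le_div_iff₀ h2t]
            have h1 : 2 - t ≤ 1/y.toReal := by linarith
            have h2 := (le_div_iff₀ hytoReal).mp h1
            nlinarith
          refine ⟨pos_iff_ne_zero.mpr hy0, ?_⟩
          rw [ha, ← ENNReal.ofReal_toReal hyne]
          exact ENNReal.ofReal_le_ofReal hy_le
        · rintro ⟨_, hya⟩
          have hy_le : y.toReal ≤ r := by
            rw [← haTo]; exact ENNReal.toReal_mono hane hya
          have hreal : 2 - 1/y.toReal ≤ t := by
            have h1 : 1/r ≤ 1/y.toReal := one_div_le_one_div_of_le hytoReal hy_le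
            have h2 : 1/r = 2 - t := by rw [hr, one_div_one_div]
            linarith
          exact (ENNReal.ofReal_le_ofReal_iff ht0).mpr hreal
  have hmuG : (Measure.map Hinv ν) (Icc 0 T) = ν (Ioc 0 a) := by
    rw [hIccIic, Measure.map_apply measurable_Hinv measurableSet_Iic, hpre]
  have hGIic : ν (Iic a) = ν (Ioc 0 a) := by
    rw [Iic_eq_union a, measure_union (disj_zero_Ioc a) measurableSet_Ioc, h0, zero_add]
  have hLHS : ∫⁻ s in Icc 0 T, s ∂(Measure.map Hinv ν) = ∫⁻ y in Ioc 0 a, Hinv y ∂ν := by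
    rw [hIccIic, setLIntegral_map measurableSet_Iic measurable_id' measurable_Hinv, hpre]
  have hCeq : Cint ν a = ∫⁻ y in Ioc 0 a, y⁻¹ ∂ν := by
    rw [Cint, Iic_eq_union a, lintegral_union measurableSet_Ioc (disj_zero_Ioc a),
      setLIntegral_measure_zero _ _ h0, zero_add]
  have hsum : (∫⁻ y in Ioc 0 a, Hinv y ∂ν) + (∫⁻ y in Ioc 0 a, y⁻¹ ∂ν)
      = 2 * ν (Ioc 0 a) := by
    rw [← lintegral_add_right _ measurable_inv]
    rw [← lintegral_indicator measurableSet_Ioc]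
    have hae : ∀ᵐ y ∂ν, y ∉ Iio (2⁻¹ : ℝ≥0∞) := measure_eq_zero_iff_ae_notMem.mp hIio
    have hcongr : ∀ᵐ y ∂ν, (Ioc 0 a).indicator (fun y => Hinv y + y⁻¹) y
        = (Ioc 0 a).indicator (fun _ => 2) y := by
      refine hae.mono fun y hy => ?_
      by_cases hmem : y ∈ Ioc 0 a
      · rw [Set.indicator_of_mem hmem, Set.indicator_of_mem hmem]
        have hyne : y ≠ ⊤ := ne_top_of_le_ne_top hane (mem_Ioc.mp hmem).2
        have hyhalf : (2⁻¹:ℝ≥0∞) ≤ y := not_lt.mp hy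
        have hypos : 0 < y.toReal :=
          ENNReal.toReal_pos (pos_iff_ne_zero.mp (mem_Ioc.mp hmem).1) hyne
        have hyhalfR : 1/2 ≤ y.toReal := by
          have h1 := ENNReal.toReal_mono hyne hyhalf
          rwa [show ((2:ℝ≥0∞)⁻¹).toReal = 1/2 by rw [ENNReal.toReal_inv]; norm_num] at h1
        have hinvle : 1/y.toReal ≤ 2 := by
          rw [div_le_iff₀ hypos]; nlinarith
        have hyinv : y⁻¹ = ENNReal.ofReal (1/y.toReal) := by
          rw [one_div, ENNReal.ofReal_inv_of_pos hypos, ENNReal.ofReal_toReal hyne]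
        rw [Hinv_eq hyne, hyinv, ← ENNReal.ofReal_add (by linarith) (by positivity)]
        have harith : 2 - 1/y.toReal + 1/y.toReal = (2:ℝ) := by ring
        rw [harith]
        norm_num
      · rw [Set.indicator_of_notMem hmem, Set.indicator_of_notMem hmem]
    rw [lintegral_congr_ae hcongr, lintegral_indicator measurableSet_Ioc, setLIntegral_const]
  have hE3a := dir2_E3 ν hrde ha1
  have hprob : ν (Iic a) + ν (Ioi a) = 1 := by
    rw [← compl_Iic, measure_add_measure_compl measurableSet_Iic, measure_univ]
  have hjug : Cint ν a + (ν (Iic a))^2 = 2 * ν (Iic a) := juggle3 hE3a hprob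
  have hCne : Cint ν a ≠ ⊤ := by
    intro h; rw [h, top_add] at hE3a; exact ENNReal.top_ne_one hE3a
  rw [hLHS, hmuG]
  have hfin : (∫⁻ y in Ioc 0 a, Hinv y ∂ν) + Cint ν a
      = (ν (Ioc 0 a))^2 + Cint ν a := by
    calc (∫⁻ y in Ioc 0 a, Hinv y ∂ν) + Cint ν a
        = (∫⁻ y in Ioc 0 a, Hinv y ∂ν) + (∫⁻ y in Ioc 0 a, y⁻¹ ∂ν) := by rw [hCeq]
      _ = 2 * ν (Ioc 0 a) := hsum
      _ = 2 * ν (Iic a) := by rw [hGIic]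
      _ = Cint ν a + (ν (Iic a))^2 := hjug.symm
      _ = Cint ν a + (ν (Ioc 0 a))^2 := by rw [hGIic]
      _ = (ν (Ioc 0 a))^2 + Cint ν a := add_comm _ _
  exact (ENNReal.add_left_inj hCne).mp hfin

end StmtAux

/-- If μ solves the χ-RDE (equivalently ∫_{[0,t]} s dμ(s) = μ([0,t])² for all t ∈ [0,1]),
then the pushforward of μ under H solves the γ-RDE; conversely, if μ' solves the γ-RDE,
then the pushforward of μ' under H⁻¹ solves the χ-RDE. -/
theorem stmt9 :
    (∀ μ : Measure ℝ≥0∞, IsProbabilityMeasure μ →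
      μ {x : ℝ≥0∞ | 1 < x ∧ x ≠ ⊤} = 0 →
      (∀ t ∈ Set.Icc (0:ℝ) 1,
        ∫⁻ s in Set.Icc 0 (ENNReal.ofReal t), s ∂μ
          = (μ (Set.Icc 0 (ENNReal.ofReal t)))^2) →
      Measure.map (fun p : ℝ × ℝ≥0∞ × ℝ≥0∞ => gammaMap p.1 p.2.1 p.2.2)
        ((volume.restrict (Set.Icc (0:ℝ) 1)).prod
          ((Measure.map Hmap μ).prod (Measure.map Hmap μ)))
        = Measure.map Hmap μ)
    ∧ (∀ μ' : Measure ℝ≥0∞, IsProbabilityMeasure μ' →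
        μ' {x : ℝ≥0∞ | 1 < x ∧ x ≠ ⊤} = 0 →
        (Measure.map (fun p : ℝ × ℝ≥0∞ × ℝ≥0∞ => gammaMap p.1 p.2.1 p.2.2)
          ((volume.restrict (Set.Icc (0:ℝ) 1)).prod (μ'.prod μ')) = μ') →
        ∀ t ∈ Set.Icc (0:ℝ) 1,
          ∫⁻ s in Set.Icc 0 (ENNReal.ofReal t), s ∂(Measure.map Hinv μ')
            = ((Measure.map Hinv μ') (Set.Icc 0 (ENNReal.ofReal t)))^2) := by
  constructor
  · intro μ hprob hsupp hchi
    haveI := hprob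
    exact StmtAux.dir1 μ hsupp hchi
  · intro μ' hprob hsupp hrde
    haveI := hprob
    exact StmtAux.dir2 μ' hsupp hrde
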